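/- For any partition of the edges of the n×n mesh M_n into two sets A and B of equal size n(n-1) each, the number of split faces (unit faces having at least one border edge in A and at least one in B) is at least (n-3)/2. -/

import Mathlib

/-- The edge set of the `n × n` mesh graph `M_n` on the vertices
`{0,…,n-1} × {0,…,n-1}` (edges join vertices at `L¹`-distance 1). -/
def meshEdges (n : ℕ) : Set (Sym2 (ℕ × ℕ)) :=
  {e | ∃ a b : ℕ × ℕ, a.1 < n ∧ a.2 < n ∧ b.1 < n ∧ b.2 < n ∧
        ((a.1 : ℤ) - (b.1 : ℤ)).natAbs + ((a.2 : ℤ) - (b.2 : ℤ)).natAbs = 1 ∧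
        e = s(a, b)}

/-- The four border edges of the unit face `F_{i,j}` of the mesh. -/
def faceBorder (i j : ℕ) : Set (Sym2 (ℕ × ℕ)) :=
  {s((i, j), (i, j + 1)), s((i, j), (i + 1, j)),
   s((i, j + 1), (i + 1, j + 1)), s((i + 1, j), (i + 1, j + 1))}

/-- The unit face `F_{i,j}` is split with respect to the edge partition `(A, B)`:
it has at least one border edge in `A` and at least one in `B`. -/
def SplitFace (A B : Set (Sym2 (ℕ × ℕ))) (i j : ℕ) : Prop :=
  (faceBorder i j ∩ A).Nonempty ∧ (faceBorder i j ∩ B).Nonempty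

lemma faceBorder_subset_mesh {n i j : ℕ} (hi : i < n - 1) (hj : j < n - 1) :
    faceBorder i j ⊆ meshEdges n := by
  intro e he
  simp only [faceBorder, Set.mem_insert_iff, Set.mem_singleton_iff] at he
  rcases he with rfl | rfl | rfl | rfl
  · exact ⟨(i, j), (i, j + 1), by omega, by omega, by omega, by omega, by simp, rfl⟩
  · exact ⟨(i, j), (i + 1, j), by omega, by omega, by omega, by omega, by simp, rfl⟩
  · exact ⟨(i, j + 1), (i + 1, j + 1), by omega, by omega, by omega, by omega, by simp, rfl⟩
  · exact ⟨(i + 1, j), (i + 1, j + 1), by omega, by omega, by omega, by omega, by simp, rfl⟩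

lemma face_AB {n : ℕ} {A B : Set (Sym2 (ℕ × ℕ))} (hU : A ∪ B = meshEdges n)
    {i j : ℕ} (hi : i < n - 1) (hj : j < n - 1) (h : ¬ SplitFace A B i j) :
    faceBorder i j ⊆ A ∨ faceBorder i j ⊆ B := by
  have hsub : faceBorder i j ⊆ A ∪ B := by
    rw [hU]; exact faceBorder_subset_mesh hi hj
  rw [SplitFace, not_and_or] at h
  rcases h with h | h
  · right
    intro e he
    rcases hsub he with hA | hB
    · exact absurd ⟨e, he, hA⟩ h
    · exact hB
  · left
    intro e he
    rcases hsub he with hA | hB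
    · exact hA
    · exact absurd ⟨e, he, hB⟩ h

lemma chain_mono {C D : Set (Sym2 (ℕ × ℕ))} (hd : Disjoint C D)
    (F : ℕ → Set (Sym2 (ℕ × ℕ))) (m : ℕ)
    (hdi : ∀ t ≤ m, F t ⊆ C ∨ F t ⊆ D)
    (hsh : ∀ t < m, (F t ∩ F (t + 1)).Nonempty) (h0 : F 0 ⊆ C) : F m ⊆ C := by
  induction m with
  | zero => exact h0
  | succ m ih =>
    have hm : F m ⊆ C := ih (fun t ht => hdi t (by omega)) (fun t ht => hsh t (by omega))
    rcases hdi (m + 1) le_rfl with h | h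
    · exact h
    · obtain ⟨e, he1, he2⟩ := hsh m (by omega)
      exact (Set.disjoint_left.mp hd (hm he1) (h he2)).elim

lemma row_mono {n : ℕ} {A B : Set (Sym2 (ℕ × ℕ))} (hU : A ∪ B = meshEdges n)
    (hdisj : Disjoint A B) (hn : 2 ≤ n) {j : ℕ} (hj : j < n - 1)
    (h : ∀ i < n - 1, ¬ SplitFace A B i j) :
    (∀ i < n - 1, faceBorder i j ⊆ A) ∨ (∀ i < n - 1, faceBorder i j ⊆ B) := by
  have hdi : ∀ i < n - 1, faceBorder i j ⊆ A ∨ faceBorder i j ⊆ B :=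
    fun i hi => face_AB hU hi hj (h i hi)
  have hsh : ∀ t, t + 1 < n - 1 →
      ((fun i => faceBorder i j) t ∩ (fun i => faceBorder i j) (t + 1)).Nonempty := by
    intro t ht
    exact ⟨s((t + 1, j), (t + 1, j + 1)), by simp [faceBorder]⟩
  rcases hdi 0 (by omega) with h0 | h0
  · left
    intro i hi
    exact chain_mono hdisj (fun i => faceBorder i j) i
      (fun t ht => hdi t (by omega)) (fun t ht => hsh t (by omega)) h0
  · right
    intro i hi
    exact chain_mono hdisj.symm (fun i => faceBorder i j) i
      (fun t ht => (hdi t (by omega)).symm) (fun t ht => hsh t (by omega)) h0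

lemma col_split {n : ℕ} {A B : Set (Sym2 (ℕ × ℕ))} (hU : A ∪ B = meshEdges n)
    (hdisj : Disjoint A B) {j j' : ℕ} (hj : j < n - 1) (hj' : j' < n - 1)
    (hAj : ∀ i < n - 1, faceBorder i j ⊆ A) (hBj' : ∀ i < n - 1, faceBorder i j' ⊆ B) :
    ∀ i < n - 1, ∃ t < n - 1, SplitFace A B i t := by
  intro i hi
  by_contra hcon
  push_neg at hcon
  have hdi : ∀ t < n - 1, faceBorder i t ⊆ A ∨ faceBorder i t ⊆ B :=
    fun t ht => face_AB hU hi ht (hcon t ht)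
  have hne : (faceBorder i j').Nonempty := ⟨s((i, j'), (i, j' + 1)), by simp [faceBorder]⟩
  have hne2 : (faceBorder i j).Nonempty := ⟨s((i, j), (i, j + 1)), by simp [faceBorder]⟩
  have hsh : ∀ c t : ℕ, ((fun t => faceBorder i (c + t)) t ∩
      (fun t => faceBorder i (c + t)) (t + 1)).Nonempty := by
    intro c t
    exact ⟨s((i, c + t + 1), (i + 1, c + t + 1)), by
      constructor
      · simp [faceBorder]
      · show _ ∈ faceBorder i (c + (t + 1))
        have : c + (t + 1) = c + t + 1 := by omega
        rw [this]; simp [faceBorder]⟩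
  rcases lt_trichotomy j j' with hlt | heq | hlt
  · have := chain_mono hdisj (fun t => faceBorder i (j + t)) (j' - j)
      (fun t ht => hdi (j + t) (by omega)) (fun t ht => hsh j t)
      (by simpa using hAj i hi)
    rw [show j + (j' - j) = j' from by omega] at this
    obtain ⟨e, he⟩ := hne
    exact Set.disjoint_left.mp hdisj (this he) (hBj' i hi he)
  · subst heq
    obtain ⟨e, he⟩ := hne
    exact Set.disjoint_left.mp hdisj (hAj i hi he) (hBj' i hi he)
  · have := chain_mono hdisj.symm (fun t => faceBorder i (j' + t)) (j - j')
      (fun t ht => (hdi (j' + t) (by omega)).symm) (fun t ht => hsh j' t)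
      (by simpa using hBj' i hi)
    rw [show j' + (j - j') = j from by omega] at this
    obtain ⟨e, he⟩ := hne2
    exact Set.disjoint_left.mp hdisj (hAj i hi he) (this he)

open Classical in
/-- Forced edges of a mono row `j`: the `n` vertical edges and the `n-1` top horizontal edges. -/
noncomputable def rowEdges (n j : ℕ) : Finset (Sym2 (ℕ × ℕ)) :=
  ((Finset.range n).image fun i => s((i, j), (i, j + 1))) ∪
    ((Finset.range (n - 1)).image fun i => s((i, j + 1), (i + 1, j + 1)))

open Classical in
lemma rowEdges_card {n : ℕ} (hn : 4 ≤ n) (j : ℕ) : (rowEdges n j).card = 2 * n - 1 := by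
  rw [rowEdges, Finset.card_union_of_disjoint, Finset.card_image_of_injOn,
    Finset.card_image_of_injOn, Finset.card_range, Finset.card_range]
  · omega
  · intro a _ b _ h
    simp only [Sym2.eq_iff, Prod.mk.injEq] at h
    omega
  · intro a _ b _ h
    simp only [Sym2.eq_iff, Prod.mk.injEq] at h
    omega
  · rw [Finset.disjoint_left]
    rintro e he he'
    simp only [Finset.mem_image, Finset.mem_range] at he he'
    obtain ⟨a, _, ha⟩ := he
    obtain ⟨b, _, hb⟩ := he'
    rw [← hb] at ha
    simp only [Sym2.eq_iff, Prod.mk.injEq] at ha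
    omega

open Classical in
lemma rowEdges_disjoint {n : ℕ} {j j' : ℕ} (h : j ≠ j') :
    Disjoint (rowEdges n j) (rowEdges n j') := by
  rw [Finset.disjoint_left]
  rintro e he he'
  simp only [rowEdges, Finset.mem_union, Finset.mem_image, Finset.mem_range] at he he'
  rcases he with ⟨a, _, ha⟩ | ⟨a, _, ha⟩ <;> rcases he' with ⟨b, _, hb⟩ | ⟨b, _, hb⟩ <;>
    (rw [← hb] at ha; simp only [Sym2.eq_iff, Prod.mk.injEq] at ha; omega)

open Classical in
lemma rowEdges_subset {n : ℕ} {A : Set (Sym2 (ℕ × ℕ))} (hn : 4 ≤ n) {j : ℕ}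
    (hmono : ∀ i < n - 1, faceBorder i j ⊆ A) :
    ↑(rowEdges n j) ⊆ A := by
  intro e he
  simp only [rowEdges, Finset.coe_union, Set.mem_union, Finset.coe_image, Set.mem_image,
    Finset.mem_coe, Finset.mem_range] at he
  rcases he with ⟨i, hi, rfl⟩ | ⟨i, hi, rfl⟩
  · by_cases hi' : i < n - 1
    · exact hmono i hi' (by simp [faceBorder])
    · have h1 : i = n - 2 + 1 := by omega
      subst h1
      exact hmono (n - 2) (by omega) (by simp [faceBorder])
  · exact hmono i hi (by simp [faceBorder])

open Classical in
lemma count_main (n : ℕ) (A B : Set (Sym2 (ℕ × ℕ))) (hU : A ∪ B = meshEdges n)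
    (hdisj : Disjoint A B) (hA : A.ncard = n * (n - 1)) (hn : 4 ≤ n)
    (hrows : ∀ j < n - 1, (∃ i < n - 1, SplitFace A B i j) ∨ (∀ i < n - 1, faceBorder i j ⊆ A)) :
    n ≤ 2 * ((Finset.range (n - 1) ×ˢ Finset.range (n - 1)).filter
      (fun p => SplitFace A B p.1 p.2)).card + 3 := by
  set P : ℕ → Prop := fun j => ∃ i < n - 1, SplitFace A B i j with hP
  set R := (Finset.range (n - 1)).filter P with hR
  set K := (Finset.range (n - 1)).filter (fun j => ¬ P j) with hK
  have hRK : R.card + K.card = n - 1 := by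
    rw [hR, hK, Finset.card_filter_add_card_filter_not, Finset.card_range]
  -- edge count
  set E := K.biUnion (rowEdges n) with hE
  have hEcard : E.card = K.card * (2 * n - 1) := by
    rw [hE, Finset.card_biUnion (fun j _ j' _ h => rowEdges_disjoint h)]
    rw [Finset.sum_congr rfl (fun j _ => rowEdges_card hn j), Finset.sum_const, smul_eq_mul]
  have hEsub : ↑E ⊆ A := by
    intro e he
    simp only [hE, Finset.coe_biUnion, Set.mem_iUnion, Finset.mem_coe] at he
    obtain ⟨j, hj, hje⟩ := he
    rw [hK, Finset.mem_filter, Finset.mem_range] at hj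
    have hmono : ∀ i < n - 1, faceBorder i j ⊆ A := by
      rcases hrows j hj.1 with h | h
      · exact absurd h hj.2
      · exact h
    exact rowEdges_subset hn hmono hje
  have hAfin : A.Finite := by
    by_contra h
    rw [Set.Infinite.ncard h] at hA
    have : 0 < n * (n - 1) := Nat.mul_pos (by omega) (by omega)
    omega
  have hEA : E.card ≤ n * (n - 1) := by
    calc E.card = (↑E : Set (Sym2 (ℕ × ℕ))).ncard := (Set.ncard_coe_finset E).symm
      _ ≤ A.ncard := Set.ncard_le_ncard hEsub hAfin
      _ = n * (n - 1) := hA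
  -- 2 * K.card ≤ n + 1
  obtain ⟨m, rfl⟩ : ∃ m, n = m + 1 := ⟨n - 1, by omega⟩
  have hkey : K.card * (2 * m + 1) ≤ (m + 1) * m := by
    rw [hEcard, show 2 * (m + 1) - 1 = 2 * m + 1 from by omega,
      show (m + 1) - 1 = m from by omega] at hEA
    exact hEA
  have h2k : 2 * K.card ≤ m + 2 := by
    by_contra hcon
    push_neg at hcon
    have h1 : (m + 3) * (2 * m + 1) ≤ (2 * K.card) * (2 * m + 1) :=
      Nat.mul_le_mul_right _ (by omega)
    nlinarith
  -- split rows inject into split faces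
  have hR2 : R.card ≤ ((Finset.range (m + 1 - 1) ×ˢ Finset.range (m + 1 - 1)).filter
      (fun p => SplitFace A B p.1 p.2)).card := by
    apply Finset.card_le_card_of_injOn
      (fun j => if h : P j then (h.choose, j) else (0, 0))
    · intro j hj
      rw [hR, Finset.mem_coe, Finset.mem_filter, Finset.mem_range] at hj
      simp only []
      rw [dif_pos hj.2]
      obtain ⟨hi, hsp⟩ := hj.2.choose_spec
      simp only [Finset.mem_coe, Finset.mem_filter, Finset.mem_product, Finset.mem_range]
      exact ⟨⟨hi, hj.1⟩, hsp⟩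
    · intro j hj j' hj' h
      rw [Finset.mem_coe, hR, Finset.mem_filter] at hj hj'
      simp only [] at h
      rw [dif_pos hj.2, dif_pos hj'.2] at h
      exact (Prod.ext_iff.mp h).2
  omega

open Classical in
theorem stmt15 (n : ℕ) (A B : Set (Sym2 (ℕ × ℕ)))
    (hU : A ∪ B = meshEdges n) (hdisj : Disjoint A B)
    (hA : A.ncard = n * (n - 1)) (hB : B.ncard = n * (n - 1)) :
    ((n : ℝ) - 3) / 2 ≤
      ({p : ℕ × ℕ | p.1 < n - 1 ∧ p.2 < n - 1 ∧ SplitFace A B p.1 p.2}.ncard : ℝ) := by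
  rcases le_or_gt n 3 with hn | hn
  · have h1 : ((n : ℝ) - 3) / 2 ≤ 0 := by
      have : (n : ℝ) ≤ 3 := by exact_mod_cast hn
      linarith
    exact h1.trans (Nat.cast_nonneg _)
  · have hn4 : 4 ≤ n := hn
    set SFin := (Finset.range (n - 1) ×ˢ Finset.range (n - 1)).filter
      (fun p => SplitFace A B p.1 p.2) with hSFin
    have hset : {p : ℕ × ℕ | p.1 < n - 1 ∧ p.2 < n - 1 ∧ SplitFace A B p.1 p.2} = ↑SFin := by
      ext p
      simp only [Set.mem_setOf_eq, hSFin, Finset.coe_filter, Finset.mem_product,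
        Finset.mem_range, Set.mem_setOf_eq]
      tauto
    rw [hset, Set.ncard_coe_finset]
    suffices h : n ≤ 2 * SFin.card + 3 by
      have h2 := (Nat.cast_le (α := ℝ)).2 h
      push_cast at h2
      linarith
    by_cases hBex : ∃ j < n - 1, ∀ i < n - 1, faceBorder i j ⊆ B
    · by_cases hAex : ∃ j < n - 1, ∀ i < n - 1, faceBorder i j ⊆ A
      · obtain ⟨j, hj, hAj⟩ := hAex
        obtain ⟨j', hj', hBj'⟩ := hBex
        have hcol := col_split hU hdisj hj hj' hAj hBj'
        have hcard : n - 1 ≤ SFin.card := by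
          have hle := Finset.card_le_card_of_injOn
            (f := fun i => if h : ∃ t < n - 1, SplitFace A B i t then (i, h.choose) else (0, 0))
            (s := Finset.range (n - 1)) (t := SFin) ?_ ?_
          · simpa using hle
          · intro i hi
            rw [Finset.mem_coe, Finset.mem_range] at hi
            simp only []
            rw [dif_pos (hcol i hi)]
            obtain ⟨ht, hsp⟩ := (hcol i hi).choose_spec
            simp only [hSFin, Finset.mem_coe, Finset.mem_filter, Finset.mem_product, Finset.mem_range]
            exact ⟨⟨hi, ht⟩, hsp⟩
          · intro i hi i' hi' h
            rw [Finset.mem_coe, Finset.mem_range] at hi hi'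
            simp only [] at h
            rw [dif_pos (hcol i hi), dif_pos (hcol i' hi')] at h
            exact (Prod.ext_iff.mp h).1
        omega
      · have hrows : ∀ j < n - 1,
            (∃ i < n - 1, SplitFace B A i j) ∨ (∀ i < n - 1, faceBorder i j ⊆ B) := by
          intro j hj
          by_cases hs : ∃ i < n - 1, SplitFace A B i j
          · obtain ⟨i, hi, h1, h2⟩ := hs
            exact Or.inl ⟨i, hi, h2, h1⟩
          · push_neg at hs
            rcases row_mono hU hdisj (by omega) hj (fun i hi => hs i hi) with hA1 | hB1
            · exact absurd ⟨j, hj, hA1⟩ hAex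
            · exact Or.inr hB1
        have hc := count_main n B A (by rw [Set.union_comm]; exact hU) hdisj.symm hB hn4 hrows
        have heq : (Finset.range (n - 1) ×ˢ Finset.range (n - 1)).filter
            (fun p => SplitFace B A p.1 p.2) = SFin := by
          rw [hSFin]
          apply Finset.filter_congr
          intro p _
          exact ⟨fun ⟨a, b⟩ => ⟨b, a⟩, fun ⟨a, b⟩ => ⟨b, a⟩⟩
        rwa [heq] at hc
    · have hrows : ∀ j < n - 1,
          (∃ i < n - 1, SplitFace A B i j) ∨ (∀ i < n - 1, faceBorder i j ⊆ A) := by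
        intro j hj
        by_cases hs : ∃ i < n - 1, SplitFace A B i j
        · exact Or.inl hs
        · push_neg at hs
          rcases row_mono hU hdisj (by omega) hj (fun i hi => hs i hi) with hA1 | hB1
          · exact Or.inr hA1
          · exact absurd ⟨j, hj, hB1⟩ hBex
      exact count_main n A B hU hdisj hA hn4 hrows
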